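/- arXiv:2412.07321 — 8 statements merged into one kernel-verified Lean document; each statement's English description precedes it below -/
import Mathlib

section
/- Let s>1 and N>1 be integers and let ω₀>0. For n=1,…,N and i=1,…,s let v_{n,i}, g_{n,i}, g̃_{n,i} be nonnegative real numbers with the compatibility condition v_{n,s}=v_{n+1,1} for 1≤n≤N−1; write v_n:=v_{n,s} and v_0:=v_{1,1}. Let τ_n>0 for 1≤n≤N, set t_n:=τ_1+⋯+τ_n, t_0:=0, and τ:=max_{1≤n≤N}τ_n. Assume that v_{n,i} ≤ v_{n,1} + ω₀ τ_n ∑_{j=1}^{i−1} v_{n,j} + ∑_{j=2}^{i} g_{n,j} + g̃_{n,i} for all 1≤n≤N and 2≤i≤s. If τ ≤ 1/ω₀, then for all 1≤n≤N and 2≤i≤s: v_{n,i} ≤ 4^{s−1} · exp(2^{s−1} ω₀ t_{n−1}) · ( v_0 + ∑_{k=1}^{n−1} ∑_{j=2}^{s} g_{k,j} + ∑_{j=2}^{i} g_{n,j} + ∑_{k=1}^{n} max_{2≤j≤s} g̃_{k,j} ). -/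
open Finset

lemma geom_aux (m : ℕ) : ∑ j ∈ Icc 1 m, (2:ℝ)^(j-1) = 2^m - 1 := by
  induction m with
  | zero => simp
  | succ k ih =>
    rw [Finset.sum_Icc_succ_top (by omega), ih]
    simp [pow_succ]
    ring

/-- Discrete Grönwall-type inequality for multi-stage time-stepping schemes. -/
theorem stmt0 (s N : ℕ) (hs : 1 < s) (hN : 1 < N) (ω₀ : ℝ) (hω₀ : 0 < ω₀)
    (v g gt : ℕ → ℕ → ℝ) (τ : ℕ → ℝ)
    (hv : ∀ n i, 1 ≤ n → n ≤ N → 1 ≤ i → i ≤ s → 0 ≤ v n i)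
    (hg : ∀ n i, 1 ≤ n → n ≤ N → 1 ≤ i → i ≤ s → 0 ≤ g n i)
    (hgt : ∀ n i, 1 ≤ n → n ≤ N → 1 ≤ i → i ≤ s → 0 ≤ gt n i)
    (hτ : ∀ n, 1 ≤ n → n ≤ N → 0 < τ n)
    (hcompat : ∀ n, 1 ≤ n → n ≤ N - 1 → v n s = v (n + 1) 1)
    (hstep : ∀ n, 1 ≤ n → n ≤ N → τ n ≤ 1 / ω₀)
    (hineq : ∀ n i, 1 ≤ n → n ≤ N → 2 ≤ i → i ≤ s →
      v n i ≤ v n 1 + ω₀ * τ n * (∑ j ∈ Icc 1 (i - 1), v n j)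
        + (∑ j ∈ Icc 2 i, g n j) + gt n i) :
    ∀ n i, 1 ≤ n → n ≤ N → 2 ≤ i → i ≤ s →
      v n i ≤ (4 : ℝ) ^ (s - 1)
        * Real.exp ((2 : ℝ) ^ (s - 1) * ω₀ * ∑ k ∈ Icc 1 (n - 1), τ k)
        * (v 1 1 + (∑ k ∈ Icc 1 (n - 1), ∑ j ∈ Icc 2 s, g k j)
          + (∑ j ∈ Icc 2 i, g n j)
          + ∑ k ∈ Icc 1 n, (Icc 2 s).sup' (Finset.nonempty_Icc.mpr hs) (gt k)) := by
  have hne : (Icc 2 s).Nonempty := Finset.nonempty_Icc.mpr hs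
  -- abbreviation for the max
  set M : ℕ → ℝ := fun k => (Icc 2 s).sup' (Finset.nonempty_Icc.mpr hs) (gt k) with hMdef
  have hgtM : ∀ k j, 2 ≤ j → j ≤ s → gt k j ≤ M k := by
    intro k j h1 h2
    exact Finset.le_sup' (gt k) (Finset.mem_Icc.mpr ⟨h1, h2⟩)
  have hM0 : ∀ k, 1 ≤ k → k ≤ N → 0 ≤ M k := by
    intro k h1 h2
    exact le_trans (hgt k 2 h1 h2 (by omega) hs) (hgtM k 2 le_rfl hs)
  have hG0 : ∀ n i, 1 ≤ n → n ≤ N → i ≤ s → 0 ≤ ∑ j ∈ Icc 2 i, g n j := by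
    intro n i h1 h2 h3
    exact Finset.sum_nonneg fun j hj => by
      rw [Finset.mem_Icc] at hj; exact hg n j h1 h2 (by omega) (by omega)
  have hGmono : ∀ n i i', 1 ≤ n → n ≤ N → i ≤ i' → i' ≤ s →
      (∑ j ∈ Icc 2 i, g n j) ≤ ∑ j ∈ Icc 2 i', g n j := by
    intro n i i' h1 h2 h3 h4
    apply Finset.sum_le_sum_of_subset_of_nonneg (Finset.Icc_subset_Icc_right h3)
    intro j hj _
    rw [Finset.mem_Icc] at hj; exact hg n j h1 h2 (by omega) (by omega)
  have hωτ : ∀ n, 1 ≤ n → n ≤ N → ω₀ * τ n ≤ 1 := by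
    intro n h1 h2
    have := hstep n h1 h2
    calc ω₀ * τ n ≤ ω₀ * (1 / ω₀) := by
          exact mul_le_mul_of_nonneg_left this hω₀.le
      _ = 1 := by field_simp
  -- within-step lemma
  have lemA : ∀ n, 1 ≤ n → n ≤ N → ∀ i, 1 ≤ i → i ≤ s →
      v n i ≤ 2^(i-1) * (v n 1 + (∑ j ∈ Icc 2 i, g n j) + M n) := by
    intro n hn hnN i
    induction i using Nat.strong_induction_on with
    | _ i ih =>
      intro hi his
      rcases eq_or_lt_of_le hi with h1 | h2
      · subst h1
        simp only [Nat.sub_self, pow_zero, one_mul]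
        rw [show (Icc 2 1 : Finset ℕ) = ∅ by decide, Finset.sum_empty]
        have := hM0 n hn hnN
        linarith
      · have h2 : 2 ≤ i := h2
        have key := hineq n i hn hnN h2 his
        have hA0 : 0 ≤ v n 1 + (∑ j ∈ Icc 2 i, g n j) + M n := by
          have := hv n 1 hn hnN le_rfl (by omega)
          have := hG0 n i hn hnN his
          have := hM0 n hn hnN
          linarith
        have hsum : ∑ j ∈ Icc 1 (i-1), v n j
            ≤ (2^(i-1) - 1) * (v n 1 + (∑ j ∈ Icc 2 i, g n j) + M n) := by
          calc ∑ j ∈ Icc 1 (i-1), v n j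
              ≤ ∑ j ∈ Icc 1 (i-1), 2^(j-1) * (v n 1 + (∑ j' ∈ Icc 2 i, g n j') + M n) := by
                apply Finset.sum_le_sum
                intro j hj
                rw [Finset.mem_Icc] at hj
                have hji : j < i := by omega
                have := ih j hji hj.1 (by omega)
                refine le_trans this ?_
                apply mul_le_mul_of_nonneg_left _ (by positivity)
                have := hGmono n j i hn hnN (by omega) his
                linarith
            _ = (∑ j ∈ Icc 1 (i-1), (2:ℝ)^(j-1)) * (v n 1 + (∑ j' ∈ Icc 2 i, g n j') + M n) := by
                rw [Finset.sum_mul]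
            _ = (2^(i-1) - 1) * (v n 1 + (∑ j' ∈ Icc 2 i, g n j') + M n) := by
                rw [geom_aux]
        have hS0 : 0 ≤ ∑ j ∈ Icc 1 (i-1), v n j := by
          apply Finset.sum_nonneg
          intro j hj
          rw [Finset.mem_Icc] at hj
          exact hv n j hn hnN hj.1 (by omega)
        have hpow1 : (1:ℝ) ≤ 2^(i-1) := one_le_pow₀ one_le_two
        have hmul : ω₀ * τ n * (∑ j ∈ Icc 1 (i-1), v n j)
            ≤ 1 * ((2^(i-1) - 1) * (v n 1 + (∑ j ∈ Icc 2 i, g n j) + M n)) := by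
          apply mul_le_mul (hωτ n hn hnN) hsum hS0 zero_le_one
        have hgti := hgtM n i h2 his
        nlinarith [key, hmul, hgti, hA0]
  -- per-step bound
  have lemB : ∀ n, 1 ≤ n → n ≤ N →
      v n s ≤ Real.exp ((2:ℝ)^(s-1) * ω₀ * τ n)
        * (v n 1 + (∑ j ∈ Icc 2 s, g n j) + M n) := by
    intro n hn hnN
    have key := hineq n s hn hnN hs le_rfl
    have hA0 : 0 ≤ v n 1 + (∑ j ∈ Icc 2 s, g n j) + M n := by
      have := hv n 1 hn hnN le_rfl (by omega)
      have := hG0 n s hn hnN le_rfl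
      have := hM0 n hn hnN
      linarith
    have hsum : ∑ j ∈ Icc 1 (s-1), v n j
        ≤ (2^(s-1) - 1) * (v n 1 + (∑ j ∈ Icc 2 s, g n j) + M n) := by
      calc ∑ j ∈ Icc 1 (s-1), v n j
          ≤ ∑ j ∈ Icc 1 (s-1), 2^(j-1) * (v n 1 + (∑ j' ∈ Icc 2 s, g n j') + M n) := by
            apply Finset.sum_le_sum
            intro j hj
            rw [Finset.mem_Icc] at hj
            refine le_trans (lemA n hn hnN j hj.1 (by omega)) ?_
            apply mul_le_mul_of_nonneg_left _ (by positivity)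
            have := hGmono n j s hn hnN (by omega) le_rfl
            linarith
        _ = (∑ j ∈ Icc 1 (s-1), (2:ℝ)^(j-1)) * (v n 1 + (∑ j' ∈ Icc 2 s, g n j') + M n) := by
            rw [Finset.sum_mul]
        _ = (2^(s-1) - 1) * (v n 1 + (∑ j' ∈ Icc 2 s, g n j') + M n) := by
            rw [geom_aux]
    have hτn := hτ n hn hnN
    have hωτ0 : 0 ≤ ω₀ * τ n := by positivity
    have hmul : ω₀ * τ n * (∑ j ∈ Icc 1 (s-1), v n j)
        ≤ ω₀ * τ n * ((2^(s-1) - 1) * (v n 1 + (∑ j ∈ Icc 2 s, g n j) + M n)) :=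
      mul_le_mul_of_nonneg_left hsum hωτ0
    have hgts := hgtM n s hs le_rfl
    have hstep1 : v n s ≤ (1 + (2:ℝ)^(s-1) * (ω₀ * τ n))
        * (v n 1 + (∑ j ∈ Icc 2 s, g n j) + M n) := by
      nlinarith [key, hmul, hgts, hA0, hωτ0]
    refine le_trans hstep1 ?_
    apply mul_le_mul_of_nonneg_right _ hA0
    have := Real.add_one_le_exp ((2:ℝ)^(s-1) * ω₀ * τ n)
    calc 1 + (2:ℝ)^(s-1) * (ω₀ * τ n) = (2:ℝ)^(s-1) * ω₀ * τ n + 1 := by ring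
      _ ≤ Real.exp ((2:ℝ)^(s-1) * ω₀ * τ n) := this
  -- multi-step bound
  have lemC : ∀ n, 1 ≤ n → n ≤ N →
      v n s ≤ Real.exp ((2:ℝ)^(s-1) * ω₀ * ∑ k ∈ Icc 1 n, τ k)
        * (v 1 1 + ∑ k ∈ Icc 1 n, ((∑ j ∈ Icc 2 s, g k j) + M k)) := by
    intro n hn
    induction n, hn using Nat.le_induction with
    | base =>
      intro h1N
      simp only [Finset.Icc_self, Finset.sum_singleton]
      refine le_trans (lemB 1 le_rfl h1N) ?_
      apply le_of_eq
      ring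
    | succ n hn ih =>
      intro hsN
      have hnN : n ≤ N := by omega
      have ihn := ih hnN
      have hb := lemB (n+1) (by omega) hsN
      have hc : v n s = v (n+1) 1 := hcompat n hn (by omega)
      have hX0 : 0 ≤ v 1 1 + ∑ k ∈ Icc 1 n, ((∑ j ∈ Icc 2 s, g k j) + M k) := by
        have h1 := hv 1 1 (le_refl 1) (by omega) le_rfl (by omega)
        have h2 : 0 ≤ ∑ k ∈ Icc 1 n, ((∑ j ∈ Icc 2 s, g k j) + M k) := by
          apply Finset.sum_nonneg
          intro k hk
          rw [Finset.mem_Icc] at hk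
          have := hG0 k s hk.1 (by omega) le_rfl
          have := hM0 k hk.1 (by omega)
          linarith
        linarith
      have hD0 : 0 ≤ (∑ j ∈ Icc 2 s, g (n+1) j) + M (n+1) := by
        have := hG0 (n+1) s (by omega) hsN le_rfl
        have := hM0 (n+1) (by omega) hsN
        linarith
      have hE1 : 1 ≤ Real.exp ((2:ℝ)^(s-1) * ω₀ * ∑ k ∈ Icc 1 n, τ k) := by
        apply Real.one_le_exp
        apply mul_nonneg (by positivity)
        apply Finset.sum_nonneg
        intro k hk
        rw [Finset.mem_Icc] at hk
        exact (hτ k hk.1 (by omega)).le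
      have step1 : v (n+1) 1 + (∑ j ∈ Icc 2 s, g (n+1) j) + M (n+1)
          ≤ Real.exp ((2:ℝ)^(s-1) * ω₀ * ∑ k ∈ Icc 1 n, τ k)
            * (v 1 1 + ∑ k ∈ Icc 1 n, ((∑ j ∈ Icc 2 s, g k j) + M k)
               + ((∑ j ∈ Icc 2 s, g (n+1) j) + M (n+1))) := by
        rw [← hc]
        have h1 : (∑ j ∈ Icc 2 s, g (n+1) j) + M (n+1)
            ≤ Real.exp ((2:ℝ)^(s-1) * ω₀ * ∑ k ∈ Icc 1 n, τ k)
              * ((∑ j ∈ Icc 2 s, g (n+1) j) + M (n+1)) :=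
          le_mul_of_one_le_left hD0 hE1
        nlinarith [ihn, h1, hE1, hX0, hD0]
      have hEpos : (0:ℝ) < Real.exp ((2:ℝ)^(s-1) * ω₀ * τ (n+1)) := Real.exp_pos _
      refine le_trans hb ?_
      have := mul_le_mul_of_nonneg_left step1 hEpos.le
      refine le_trans this (le_of_eq ?_)
      rw [Finset.sum_Icc_succ_top (by omega : 1 ≤ n+1) τ,
          Finset.sum_Icc_succ_top (by omega : 1 ≤ n+1) (fun k => (∑ j ∈ Icc 2 s, g k j) + M k),
          show (2:ℝ)^(s-1)*ω₀*((∑ k ∈ Icc 1 n, τ k) + τ (n+1))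
            = (2:ℝ)^(s-1)*ω₀*(∑ k ∈ Icc 1 n, τ k) + (2:ℝ)^(s-1)*ω₀*(τ (n+1)) from by ring,
          Real.exp_add]
      ring
  -- final assembly
  intro n i hn hnN h2 his
  have hi1 : 1 ≤ i := by omega
  have hA := lemA n hn hnN i hi1 his
  have hpow : (2:ℝ)^(i-1) ≤ (2:ℝ)^(s-1) := by
    apply pow_le_pow_right₀ one_le_two (by omega)
  have hpow2 : (2:ℝ)^(s-1) ≤ (4:ℝ)^(s-1) := by
    apply pow_le_pow_left₀ (by norm_num) (by norm_num)
  have hGni0 := hG0 n i hn hnN his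
  have hMn0 := hM0 n hn hnN
  have hA0 : 0 ≤ v n 1 + (∑ j ∈ Icc 2 i, g n j) + M n := by
    have := hv n 1 hn hnN le_rfl (by omega)
    linarith
  rcases eq_or_lt_of_le hn with h1 | hgt1
  · -- n = 1
    subst h1
    simp only [Nat.sub_self]
    rw [show (Icc 1 0 : Finset ℕ) = ∅ by decide]
    simp only [Finset.sum_empty, Finset.Icc_self, Finset.sum_singleton, mul_zero,
      Real.exp_zero, mul_one]
    calc v 1 i ≤ 2^(i-1) * (v 1 1 + (∑ j ∈ Icc 2 i, g 1 j) + M 1) := hA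
      _ ≤ (4:ℝ)^(s-1) * (v 1 1 + (∑ j ∈ Icc 2 i, g 1 j) + M 1) := by
          apply mul_le_mul_of_nonneg_right (le_trans hpow hpow2) hA0
      _ = (4:ℝ)^(s-1) * (v 1 1 + 0 + (∑ j ∈ Icc 2 i, g 1 j) + M 1) := by ring
  · -- 2 ≤ n
    have hn2 : 2 ≤ n := hgt1
    have hc : v (n-1) s = v n 1 := by
      have := hcompat (n-1) (by omega) (by omega)
      rwa [Nat.sub_add_cancel (by omega)] at this
    have hC := lemC (n-1) (by omega) (by omega)
    rw [hc] at hC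
    have hE1 : 1 ≤ Real.exp ((2:ℝ)^(s-1) * ω₀ * ∑ k ∈ Icc 1 (n-1), τ k) := by
      apply Real.one_le_exp
      apply mul_nonneg (by positivity)
      apply Finset.sum_nonneg
      intro k hk
      rw [Finset.mem_Icc] at hk
      exact (hτ k hk.1 (by omega)).le
    have hX0 : 0 ≤ v 1 1 + ∑ k ∈ Icc 1 (n-1), ((∑ j ∈ Icc 2 s, g k j) + M k) := by
      have h1 := hv 1 1 (le_refl 1) (by omega) le_rfl (by omega)
      have h2 : 0 ≤ ∑ k ∈ Icc 1 (n-1), ((∑ j ∈ Icc 2 s, g k j) + M k) := by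
        apply Finset.sum_nonneg
        intro k hk
        rw [Finset.mem_Icc] at hk
        have := hG0 k s hk.1 (by omega) le_rfl
        have := hM0 k hk.1 (by omega)
        linarith
      linarith
    have hA2 : v n 1 + (∑ j ∈ Icc 2 i, g n j) + M n
        ≤ Real.exp ((2:ℝ)^(s-1) * ω₀ * ∑ k ∈ Icc 1 (n-1), τ k)
          * ((v 1 1 + ∑ k ∈ Icc 1 (n-1), ((∑ j ∈ Icc 2 s, g k j) + M k))
            + (∑ j ∈ Icc 2 i, g n j) + M n) := by
      nlinarith [hC, mul_nonneg (sub_nonneg.2 hE1) hGni0, mul_nonneg (sub_nonneg.2 hE1) hMn0]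
    have hMsplit : ∑ k ∈ Icc 1 n, M k = (∑ k ∈ Icc 1 (n-1), M k) + M n := by
      conv_lhs => rw [show n = n - 1 + 1 by omega]
      rw [Finset.sum_Icc_succ_top (by omega : 1 ≤ n - 1 + 1) M,
        show n - 1 + 1 = n by omega]
    rw [hMsplit]
    calc v n i ≤ 2^(i-1) * (v n 1 + (∑ j ∈ Icc 2 i, g n j) + M n) := hA
      _ ≤ (2:ℝ)^(s-1) * (Real.exp ((2:ℝ)^(s-1) * ω₀ * ∑ k ∈ Icc 1 (n-1), τ k)
            * ((v 1 1 + ∑ k ∈ Icc 1 (n-1), ((∑ j ∈ Icc 2 s, g k j) + M k))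
              + (∑ j ∈ Icc 2 i, g n j) + M n)) := by
          apply mul_le_mul hpow hA2 hA0 (by positivity)
      _ ≤ (4:ℝ)^(s-1) * (Real.exp ((2:ℝ)^(s-1) * ω₀ * ∑ k ∈ Icc 1 (n-1), τ k)
            * ((v 1 1 + ∑ k ∈ Icc 1 (n-1), ((∑ j ∈ Icc 2 s, g k j) + M k))
              + (∑ j ∈ Icc 2 i, g n j) + M n)) := by
          apply mul_le_mul_of_nonneg_right hpow2
          apply mul_nonneg (Real.exp_pos _).le
          linarith
      _ = (4:ℝ)^(s-1) * Real.exp ((2:ℝ)^(s-1) * ω₀ * ∑ k ∈ Icc 1 (n-1), τ k)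
            * (v 1 1 + (∑ k ∈ Icc 1 (n-1), ∑ j ∈ Icc 2 s, g k j)
              + (∑ j ∈ Icc 2 i, g n j)
              + ((∑ k ∈ Icc 1 (n-1), M k) + M n)) := by
          rw [Finset.sum_add_distrib]
          ring
end

section
/- Let M be a real s×s lower triangular matrix whose symmetric part S(M):=(M+Mᵀ)/2 satisfies xᵀS(M)x ≥ λ|x|² for every x∈ℝ^s, where λ>0. Then M is invertible, M⁻¹ is lower triangular, and for all vectors v,u∈ℝ^s and every 1≤k≤s: ∑_{i=1}^{k} ∑_{j=1}^{i} (M⁻¹)_{ij} v_j u_i ≤ (1/λ) · ( ∑_{i=1}^{k} v_i² )^{1/2} · ( ∑_{i=1}^{k} u_i² )^{1/2}. -/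
open Finset Matrix

/-- Bilinear bound for truncated convolution sums generated by the inverse of a
lower triangular matrix with coercive symmetric part. -/
theorem stmt4 (s : ℕ) (hs : 1 ≤ s) (M : Matrix (Fin s) (Fin s) ℝ) (lam : ℝ) (hlam : 0 < lam)
    (hlow : ∀ i j : Fin s, i < j → M i j = 0)
    (hcoer : ∀ x : Fin s → ℝ,
      lam * (x ⬝ᵥ x) ≤ x ⬝ᵥ ((1 / 2 : ℝ) • (M + Mᵀ)).mulVec x)
    (v u : Fin s → ℝ) (k : ℕ) (hk1 : 1 ≤ k) (hk2 : k ≤ s) :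
    IsUnit M.det
    ∧ (∀ i j : Fin s, i < j → M⁻¹ i j = 0)
    ∧ ∑ i ∈ Finset.univ.filter (fun i : Fin s => (i : ℕ) < k),
          ∑ j ∈ Finset.Iic i, M⁻¹ i j * v j * u i
        ≤ (1 / lam)
          * Real.sqrt (∑ i ∈ Finset.univ.filter (fun i : Fin s => (i : ℕ) < k), v i ^ 2)
          * Real.sqrt (∑ i ∈ Finset.univ.filter (fun i : Fin s => (i : ℕ) < k), u i ^ 2) := by
  -- simplify coercivity
  have hc : ∀ x : Fin s → ℝ, lam * (x ⬝ᵥ x) ≤ x ⬝ᵥ M.mulVec x := by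
    intro x
    have h := hcoer x
    have he : x ⬝ᵥ ((1 / 2 : ℝ) • (M + Mᵀ)).mulVec x = x ⬝ᵥ M.mulVec x := by
      have ht : x ⬝ᵥ Mᵀ.mulVec x = x ⬝ᵥ M.mulVec x := by
        rw [Matrix.mulVec_transpose, Matrix.dotProduct_mulVec, dotProduct_comm]
      rw [Matrix.smul_mulVec, Matrix.add_mulVec, dotProduct_smul, dotProduct_add, ht,
        smul_eq_mul]
      ring
    rwa [he] at h
  -- invertibility
  have hdet : M.det ≠ 0 := by
    intro h0
    obtain ⟨x, hx, hMx⟩ := (Matrix.exists_mulVec_eq_zero_iff).2 h0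
    have h1 := hc x
    rw [hMx, dotProduct_zero] at h1
    have hnn : (0:ℝ) ≤ x ⬝ᵥ x := Finset.sum_nonneg fun i _ => mul_self_nonneg _
    have hxx : 0 < x ⬝ᵥ x := by
      rcases lt_or_eq_of_le hnn with h | h
      · exact h
      · exact absurd ((dotProduct_self_eq_zero).1 h.symm) hx
    nlinarith
  have hunit : IsUnit M.det := isUnit_iff_ne_zero.2 hdet
  haveI : Invertible M := M.invertibleOfIsUnitDet hunit
  -- inverse is lower triangular
  have hbt : Mᵀ.BlockTriangular (id : Fin s → Fin s) := by
    intro i j hij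
    exact hlow j i hij
  haveI : Invertible Mᵀ := Mᵀ.invertibleOfIsUnitDet (by rwa [Matrix.det_transpose, isUnit_iff_ne_zero])
  have hbtinv : (Mᵀ)⁻¹.BlockTriangular (id : Fin s → Fin s) :=
    Matrix.blockTriangular_inv_of_blockTriangular hbt
  have hinvlow : ∀ i j : Fin s, i < j → M⁻¹ i j = 0 := by
    intro i j hij
    have h := hbtinv (i := j) (j := i) hij
    rwa [← Matrix.transpose_nonsing_inv, Matrix.transpose_apply] at h
  refine ⟨hunit, hinvlow, ?_⟩
  -- truncated vectors
  set w : Fin s → ℝ := fun i => if (i : ℕ) < k then v i else 0 with hw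
  set tu : Fin s → ℝ := fun i => if (i : ℕ) < k then u i else 0 with htu
  set y : Fin s → ℝ := M⁻¹.mulVec w with hy
  have hMy : M.mulVec y = w := by
    rw [hy, Matrix.mulVec_mulVec, Matrix.mul_nonsing_inv M hunit, Matrix.one_mulVec]
  -- the LHS equals ∑ i, y i * tu i
  have hLHS : ∑ i ∈ Finset.univ.filter (fun i : Fin s => (i : ℕ) < k),
      ∑ j ∈ Finset.Iic i, M⁻¹ i j * v j * u i = ∑ i, y i * tu i := by
    have h2 : ∑ i, y i * tu i
        = ∑ i ∈ Finset.univ.filter (fun i : Fin s => (i : ℕ) < k), y i * u i := by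
      rw [Finset.sum_filter]
      apply Finset.sum_congr rfl
      intro i _
      by_cases h : (i : ℕ) < k <;> simp [htu, h]
    rw [h2]
    apply Finset.sum_congr rfl
    intro i hi
    rw [Finset.mem_filter] at hi
    have hyi : y i = ∑ j ∈ Finset.Iic i, M⁻¹ i j * v j := by
      rw [hy]
      show ∑ j, M⁻¹ i j * w j = _
      rw [← Finset.sum_subset (Finset.subset_univ (Finset.Iic i))]
      · apply Finset.sum_congr rfl
        intro j hj
        rw [Finset.mem_Iic] at hj
        have hjk : (j : ℕ) < k := lt_of_le_of_lt (Fin.le_iff_val_le_val.1 hj) hi.2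
        simp [hw, hjk]
      · intro j _ hj
        rw [Finset.mem_Iic] at hj
        rw [hinvlow i j (lt_of_not_ge hj), zero_mul]
    rw [hyi, Finset.sum_mul]
  rw [hLHS]
  -- norm identities
  have hww : ∑ i, w i ^ 2
      = ∑ i ∈ Finset.univ.filter (fun i : Fin s => (i : ℕ) < k), v i ^ 2 := by
    rw [Finset.sum_filter]
    apply Finset.sum_congr rfl
    intro i _
    by_cases h : (i : ℕ) < k <;> simp [hw, h]
  have huu : ∑ i, tu i ^ 2
      = ∑ i ∈ Finset.univ.filter (fun i : Fin s => (i : ℕ) < k), u i ^ 2 := by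
    rw [Finset.sum_filter]
    apply Finset.sum_congr rfl
    intro i _
    by_cases h : (i : ℕ) < k <;> simp [htu, h]
  set a : ℝ := Real.sqrt (∑ i, y i ^ 2) with ha
  set b : ℝ := Real.sqrt (∑ i, w i ^ 2) with hb
  set c : ℝ := Real.sqrt (∑ i, tu i ^ 2) with hcc
  have ha0 : 0 ≤ a := Real.sqrt_nonneg _
  have hb0 : 0 ≤ b := Real.sqrt_nonneg _
  have hc0 : 0 ≤ c := Real.sqrt_nonneg _
  have hyy : y ⬝ᵥ y = a ^ 2 := by
    rw [ha, Real.sq_sqrt (Finset.sum_nonneg fun i _ => sq_nonneg _)]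
    simp [dotProduct, sq]
  have hyw : y ⬝ᵥ w ≤ a * b := by
    have := Real.sum_mul_le_sqrt_mul_sqrt Finset.univ y w
    simpa [dotProduct, ha, hb] using this
  have hkey : lam * a ^ 2 ≤ a * b := by
    have h1 := hc y
    rw [hMy, hyy] at h1
    exact le_trans h1 hyw
  have hab : lam * a ≤ b := by
    rcases eq_or_lt_of_le ha0 with h | h
    · rw [← h]; simpa using hb0
    · have h2 : (lam * a) * a ≤ b * a := by nlinarith
      exact le_of_mul_le_mul_right h2 h
  have halb : a ≤ (1 / lam) * b := by
    rw [one_div, inv_mul_eq_div]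
    exact (le_div_iff₀' hlam).2 hab
  have hfin : ∑ i, y i * tu i ≤ a * c := by
    have := Real.sum_mul_le_sqrt_mul_sqrt Finset.univ y tu
    simpa [ha, hcc] using this
  calc ∑ i, y i * tu i ≤ a * c := hfin
    _ ≤ ((1 / lam) * b) * c := by
        exact mul_le_mul_of_nonneg_right halb hc0
    _ = (1 / lam) * Real.sqrt (∑ i ∈ Finset.univ.filter (fun i : Fin s => (i : ℕ) < k), v i ^ 2)
        * Real.sqrt (∑ i ∈ Finset.univ.filter (fun i : Fin s => (i : ℕ) < k), u i ^ 2) := by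
        rw [hb, hcc, hww, huu]
end

section
/- Let s ≥ 2 be an integer and set s_I := s−1. Let Â = (â_{ij}) be a real s×s strictly lower triangular matrix with â_{21} ≠ 0, and let A = (a_{ij}) be a real s×s lower triangular matrix whose first row is zero. Assume the canopy node condition ∑_{j=1}^{s} a_{ij} = ∑_{j=1}^{s} â_{ij} for every 1≤i≤s. Define the s_I×s_I matrices A_I := (a_{i+1,j+1})_{1≤i,j≤s_I} and A_E := (â_{i+1,j})_{1≤i,j≤s_I}, and let E be the s_I×s_I lower triangular matrix with all entries on and below the diagonal equal to 1 and I the s_I×s_I identity. If A_I = A_E · (I − (1/2)E⁻¹), then a_{i+1,1} = (1/2)â_{i+1,1} for every 1≤i≤s_I; in particular a_{21} = â_{21}/2 ≠ 0, so the first column of A below the first row cannot vanish. Hence no Radau-type (ARS-type) implicit-explicit Runge–Kutta method (one with a_{i1}=0 for all i) can satisfy A_I = A_E(I − (1/2)E⁻¹). -/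
open Matrix

/-- For a refined IERK method (`A_I = A_E (I − (1/2)E⁻¹)`) satisfying the canopy node
condition, the first column of the implicit tableau below the first row equals half
of that of the explicit tableau; in particular it cannot vanish, so no Radau-type
(ARS-type) method is refined. -/
theorem stmt8 (sI : ℕ) (hsI : 1 ≤ sI)
    (A Ah : Matrix (Fin (sI + 1)) (Fin (sI + 1)) ℝ)
    (hAh_strict : ∀ i j : Fin (sI + 1), i ≤ j → Ah i j = 0)
    (hAh21 : Ah 1 0 ≠ 0)
    (hA_lower : ∀ i j : Fin (sI + 1), i < j → A i j = 0)
    (hA_first : ∀ j : Fin (sI + 1), A 0 j = 0)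
    (hcanopy : ∀ i : Fin (sI + 1), ∑ j, A i j = ∑ j, Ah i j)
    (AI AE : Matrix (Fin sI) (Fin sI) ℝ)
    (hAI : ∀ i j : Fin sI, AI i j = A i.succ j.succ)
    (hAE : ∀ i j : Fin sI, AE i j = Ah i.succ j.castSucc)
    (E : Matrix (Fin sI) (Fin sI) ℝ)
    (hE : ∀ i j : Fin sI, E i j = if j ≤ i then 1 else 0)
    (hrefined : AI = AE * (1 - (1 / 2 : ℝ) • E⁻¹)) :
    (∀ i : Fin sI, A i.succ 0 = (1 / 2) * Ah i.succ 0)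
    ∧ A 1 0 = Ah 1 0 / 2
    ∧ A 1 0 ≠ 0
    ∧ ¬(∀ i : Fin (sI + 1), A i 0 = 0) := by
  have : NeZero sI := ⟨by omega⟩
  -- determinant of E is 1
  have hdet : E.det = 1 := by
    rw [Matrix.det_of_lowerTriangular E (by
      intro i j hij
      rw [hE]
      simp only [ite_eq_right_iff]
      intro h
      exact absurd (lt_of_lt_of_le (OrderDual.toDual_lt_toDual.mp hij) h) (lt_irrefl _))]
    have : ∀ i : Fin sI, E i i = 1 := fun i => by rw [hE]; simp
    simp [this]
  have hinv : E⁻¹ * E = 1 := Matrix.nonsing_inv_mul E (by rw [hdet]; exact isUnit_one)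
  -- multiply refined relation by E
  have hkey : AI * E = AE * E - (1 / 2 : ℝ) • AE := by
    rw [hrefined, Matrix.mul_assoc, sub_mul, Matrix.smul_mul, hinv, Matrix.one_mul,
      Matrix.mul_sub, Matrix.mul_smul, Matrix.mul_one]
  -- column 0 of E is all ones
  have hEcol : ∀ k : Fin sI, E k 0 = 1 := fun k => by rw [hE]; simp [Fin.zero_le]
  -- row-sum identity from hkey at column 0
  have hsum : ∀ i : Fin sI, ∑ k, AI i k = ∑ k, AE i k - (1 / 2) * AE i 0 := by
    intro i
    have h := congrFun (congrFun hkey i) 0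
    simp only [Matrix.mul_apply, Matrix.sub_apply, Matrix.smul_apply, smul_eq_mul] at h
    simpa [hEcol] using h
  -- main claim
  have hmain : ∀ i : Fin sI, A i.succ 0 = (1 / 2) * Ah i.succ 0 := by
    intro i
    have hc := hcanopy i.succ
    rw [Fin.sum_univ_succ (fun j => A i.succ j), Fin.sum_univ_castSucc (fun j => Ah i.succ j)]
      at hc
    have hlast : Ah i.succ (Fin.last sI) = 0 := hAh_strict _ _ (Fin.le_last _)
    rw [hlast, add_zero] at hc
    have h1 : ∑ j : Fin sI, A i.succ j.succ = ∑ k, AI i k := by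
      simp [hAI]
    have h2 : ∑ j : Fin sI, Ah i.succ j.castSucc = ∑ k, AE i k := by
      simp [hAE]
    have h3 : AE i 0 = Ah i.succ 0 := by
      rw [hAE]; congr 1
    rw [h1, h2, hsum i, h3] at hc
    linarith
  have h10 : A 1 0 = Ah 1 0 / 2 := by
    have := hmain ⟨0, by omega⟩
    have hs : (Fin.succ ⟨0, by omega⟩ : Fin (sI + 1)) = 1 := by
      rw [show (⟨0, by omega⟩ : Fin sI) = 0 from rfl]
      apply Fin.ext
      simp [Fin.val_one', Nat.mod_eq_of_lt (show 1 < sI + 1 by omega)]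
    rw [hs] at this
    linarith
  refine ⟨hmain, h10, ?_, ?_⟩
  · rw [h10]
    exact div_ne_zero hAh21 two_ne_zero
  · intro h
    have h1 := h 1
    rw [h10] at h1
    exact div_ne_zero hAh21 two_ne_zero h1
end

section
/- There exist no real numbers c₂, â₃₁, â₃₂ such that â₃₁ + â₃₂ = 1, â₃₂·c₂ = 1/2, and (â₃₁+â₃₂)·c₂/2 + â₃₂/2 = 1/2 simultaneously hold. Consequently there is no 3-stage refined implicit-explicit Runge–Kutta method of second-order accuracy. -/
/-- Nonexistence of a 3-stage second-order refined IERK method: the order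
conditions `â₃₁ + â₃₂ = 1`, `â₃₂ c₂ = 1/2` and `(â₃₁+â₃₂)c₂/2 + â₃₂/2 = 1/2`
have no real solution. -/
theorem stmt11 : ¬ ∃ c₂ a31 a32 : ℝ,
    a31 + a32 = 1 ∧ a32 * c₂ = 1 / 2 ∧ (a31 + a32) * c₂ / 2 + a32 / 2 = 1 / 2 := by
  rintro ⟨c, a, b, h1, h2, h3⟩
  have hb : b = 1 - c := by rw [h1] at h3; linarith
  rw [hb] at h2
  nlinarith [sq_nonneg (c - 1/2)]
end

section
/- Let c₂ > 0 and let c₃ be a real number satisfying c₃² − (1/(2c₂) + c₂)·c₃ + (c₂−1)² = 0. Define the 3×3 real lower triangular matrix D with entries D₁₁ = D₂₂ = D₃₃ = 1/c₂, D₂₁ = (2c₂ − c₃)/c₂², D₃₁ = (4c₂³ − 2c₂² − c₂ + 2c₂²c₃ + c₃ − 2c₂c₃²)/(2c₂⁴), D₃₂ = (2c₂² + 2c₃c₂ − 1)/(2c₂³), and all other entries zero, and let S(D) := (D+Dᵀ)/2 be its symmetric part. Then the determinant of the leading 2×2 principal submatrix of S(D) equals c₃(4c₂ − c₃)/(4c₂⁴),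 and det S(D) = (c₂−1)²(2c₂² + 2c₂ − 1)/(8c₂⁷). -/
open Matrix

/-- Principal minors of the symmetric part of the differentiation matrix
`D_R^{(2,4)}(c₂)` of the second-order 4-stage refined IERK method. -/
theorem stmt13 (c₂ c₃ : ℝ) (hc₂ : 0 < c₂)
    (hc₃ : c₃ ^ 2 - (1 / (2 * c₂) + c₂) * c₃ + (c₂ - 1) ^ 2 = 0) :
    let D : Matrix (Fin 3) (Fin 3) ℝ :=
      !![1 / c₂, 0, 0;
         (2 * c₂ - c₃) / c₂ ^ 2, 1 / c₂, 0;
         (4 * c₂ ^ 3 - 2 * c₂ ^ 2 - c₂ + 2 * c₂ ^ 2 * c₃ + c₃ - 2 * c₂ * c₃ ^ 2)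
             / (2 * c₂ ^ 4),
           (2 * c₂ ^ 2 + 2 * c₃ * c₂ - 1) / (2 * c₂ ^ 3), 1 / c₂]
    let S : Matrix (Fin 3) (Fin 3) ℝ := (1 / 2 : ℝ) • (D + Dᵀ)
    Matrix.det !![S 0 0, S 0 1; S 1 0, S 1 1] = c₃ * (4 * c₂ - c₃) / (4 * c₂ ^ 4)
    ∧ S.det = (c₂ - 1) ^ 2 * (2 * c₂ ^ 2 + 2 * c₂ - 1) / (8 * c₂ ^ 7) := by
  intro D S
  have hc₂' : c₂ ≠ 0 := ne_of_gt hc₂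
  have hq : c₃ ^ 2 * (2 * c₂) - (1 + 2 * c₂ * c₂) * c₃ + (c₂ - 1) ^ 2 * (2 * c₂) = 0 := by
    have h := hc₃
    field_simp at h
    linarith [h]
  constructor
  · simp only [S, D, Matrix.det_fin_two, Matrix.smul_apply, Matrix.add_apply,
      Matrix.transpose_apply, Matrix.cons_val', Matrix.cons_val_zero, Matrix.cons_val_one,
      Matrix.head_cons, Matrix.head_fin_const, Matrix.empty_val', Matrix.cons_val_fin_one,
      smul_eq_mul, Matrix.of_apply]
    field_simp
    ring
  · simp only [S, D, Matrix.det_fin_three, Matrix.smul_apply, Matrix.add_apply,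
      Matrix.transpose_apply, Matrix.cons_val', Matrix.cons_val_zero, Matrix.cons_val_one,
      Matrix.head_cons, Matrix.head_fin_const, Matrix.empty_val', Matrix.cons_val_fin_one,
      Matrix.cons_val_two, Matrix.tail_cons, smul_eq_mul, Matrix.of_apply]
    field_simp
    linear_combination ((16 : ℝ) * c₂ - 32 * c₂ ^ 2 - 64 * c₂ ^ 3) * hq
end

section
/- Let c₂ > 0 and let c₃ be a real number satisfying c₃² − (1/(2c₂) + c₂)·c₃ + (c₂−1)² = 0. Define the vectors c := (0, c₂, c₃, 1), b := ( (1+c₃−c₂)/2 − 1/(4c₂), (1−c₂)/2, 1/(4c₂) + (c₂−c₃)/2, c₂/2 ), and b̂ := ( 1 − 1/(2c₂) + c₃ − c₂, 1/(2c₂) − c₃, c₂, 0 ) in ℝ⁴. Then the first- and second-order Runge–Kutta order conditions hold: ∑_k b_k = 1, ∑_k b̂_k = 1, ∑_k b_k c_k = 1/2, and ∑_k b̂_k c_k = 1/2. -/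
/-- First- and second-order conditions for the R-IERK(2,4;c₂) weight vectors. -/
theorem stmt17 (c₂ c₃ : ℝ) (hc₂ : 0 < c₂)
    (hc₃ : c₃ ^ 2 - (1 / (2 * c₂) + c₂) * c₃ + (c₂ - 1) ^ 2 = 0) :
    let c : Fin 4 → ℝ := ![0, c₂, c₃, 1]
    let b : Fin 4 → ℝ :=
      ![(1 + c₃ - c₂) / 2 - 1 / (4 * c₂), (1 - c₂) / 2,
        1 / (4 * c₂) + (c₂ - c₃) / 2, c₂ / 2]
    let bh : Fin 4 → ℝ := ![1 - 1 / (2 * c₂) + c₃ - c₂, 1 / (2 * c₂) - c₃, c₂, 0]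
    (∑ k, b k = 1) ∧ (∑ k, bh k = 1)
    ∧ (∑ k, b k * c k = 1 / 2) ∧ (∑ k, bh k * c k = 1 / 2) := by
  have h₂ : c₂ ≠ 0 := ne_of_gt hc₂
  simp only [Fin.sum_univ_four, Matrix.cons_val_zero, Matrix.cons_val_one, Matrix.head_cons,
    Matrix.cons_val_two, Matrix.tail_cons, Matrix.cons_val_three]
  refine ⟨by ring, by field_simp; ring, ?_, by field_simp; ring⟩
  field_simp
  field_simp at hc₃
  linarith [hc₃]
end

section
/- Let â₅₂ be any real number and set â₅₁ := 17â₅₂/103 − 86756827361/181963162950. Define c := (0, 1, 4/5, 7/10, 12/25, 1) ∈ ℝ⁶, b := (206221/2306412, 355973/1153206, −422005/768804, 13730/192201, 553250/576603, 69125/576603), b̂ := (206221/1153206, 168575/384402, −98430/64067, 322750/192201, 138250/576603, 0), and the 6×6 lower triangular matrices A and Â by: Â strictly lower triangular with rows (0), (1, 0), (−2/5, 6/5, 0), (−98716201/164885714, 1037580218/3709928565, 756096860/741985713, 0), (â₅₁, â₅₂, 14091138538/30327193825 − 190â₅₂/103, 70â₅₂/103 + 89552314349/181963162950, 0), (206221/1153206,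 168575/384402, −98430/64067, 322750/192201, 138250/576603, 0); and A lower triangular with rows (0), (1/2, 1/2), (−1/5, 2/5, 3/5), (−98716201/329771428, −2367068609/14839714260, 267670251/412214285, 378048430/741985713), (â₅₁/2, (â₅₁+â₅₂)/2, (â₅₂+â₅₃)/2, (â₅₃+â₅₄)/2, 35â₅₂/103 + 89552314349/363926325900) where â₅₃, â₅₄ denote the third and fourth entries of the fifth row of Â, and last row equal to b. Then all the order conditions up to third order hold: bᵀ𝟙 = 1, b̂ᵀ𝟙 = 1, bᵀc = 1/2, b̂ᵀc = 1/2, bᵀ(c⊙c) = 1/3, b̂ᵀ(c⊙c) = 1/3, bᵀAc = 1/6, b̂ᵀÂc = 1/6, bᵀÂc = 1/6, and b̂ᵀAc = 1/6, where ⊙ denotes entrywise product. Moreover the canopy node condition A𝟙 = Â𝟙 = c holds. -/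
set_option maxHeartbeats 1000000


open Matrix

@[simp] lemma vec6_five {α : Type*} (a b c d e f : α) : ![a, b, c, d, e, f] 5 = f := rfl
@[simp] lemma vec6_four {α : Type*} (a b c d e f : α) : ![a, b, c, d, e, f] 4 = e := rfl
@[simp] lemma vec6_three {α : Type*} (a b c d e f : α) : ![a, b, c, d, e, f] 3 = d := rfl

/-- The one-parameter family R-IERK(3,6;â₅₂) satisfies the canopy node condition
and all the order conditions up to third order, for every value of `â₅₂`. -/
theorem stmt18 (a52 : ℝ) :
    let a51 : ℝ := 17 * a52 / 103 - 86756827361 / 181963162950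
    let a53 : ℝ := 14091138538 / 30327193825 - 190 * a52 / 103
    let a54 : ℝ := 70 * a52 / 103 + 89552314349 / 181963162950
    let c : Fin 6 → ℝ := ![0, 1, 4 / 5, 7 / 10, 12 / 25, 1]
    let b : Fin 6 → ℝ :=
      ![206221 / 2306412, 355973 / 1153206, -422005 / 768804, 13730 / 192201,
        553250 / 576603, 69125 / 576603]
    let bh : Fin 6 → ℝ :=
      ![206221 / 1153206, 168575 / 384402, -98430 / 64067, 322750 / 192201,
        138250 / 576603, 0]
    let Ah : Matrix (Fin 6) (Fin 6) ℝ :=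
      !![0, 0, 0, 0, 0, 0;
         1, 0, 0, 0, 0, 0;
         -2 / 5, 6 / 5, 0, 0, 0, 0;
         -98716201 / 164885714, 1037580218 / 3709928565, 756096860 / 741985713, 0, 0, 0;
         a51, a52, a53, a54, 0, 0;
         206221 / 1153206, 168575 / 384402, -98430 / 64067, 322750 / 192201,
           138250 / 576603, 0]
    let A : Matrix (Fin 6) (Fin 6) ℝ :=
      !![0, 0, 0, 0, 0, 0;
         1 / 2, 1 / 2, 0, 0, 0, 0;
         -1 / 5, 2 / 5, 3 / 5, 0, 0, 0;
         -98716201 / 329771428, -2367068609 / 14839714260, 267670251 / 412214285,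
           378048430 / 741985713, 0, 0;
         a51 / 2, (a51 + a52) / 2, (a52 + a53) / 2, (a53 + a54) / 2,
           35 * a52 / 103 + 89552314349 / 363926325900, 0;
         206221 / 2306412, 355973 / 1153206, -422005 / 768804, 13730 / 192201,
           553250 / 576603, 69125 / 576603]
    (∑ k, b k = 1) ∧ (∑ k, bh k = 1)
    ∧ (∑ k, b k * c k = 1 / 2) ∧ (∑ k, bh k * c k = 1 / 2)
    ∧ (∑ k, b k * (c k * c k) = 1 / 3) ∧ (∑ k, bh k * (c k * c k) = 1 / 3)
    ∧ (b ⬝ᵥ A.mulVec c = 1 / 6) ∧ (bh ⬝ᵥ Ah.mulVec c = 1 / 6)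
    ∧ (b ⬝ᵥ Ah.mulVec c = 1 / 6) ∧ (bh ⬝ᵥ A.mulVec c = 1 / 6)
    ∧ (A.mulVec (fun _ => 1) = c) ∧ (Ah.mulVec (fun _ => 1) = c) := by
  intro a51 a53 a54 c b bh Ah A
  refine ⟨?_, ?_, ?_, ?_, ?_, ?_, ?_, ?_, ?_, ?_, ?_, ?_⟩
  · simp [b, Fin.sum_univ_six]; norm_num
  · simp [bh, Fin.sum_univ_six]; norm_num
  · simp [b, c, Fin.sum_univ_six]; norm_num
  · simp [bh, c, Fin.sum_univ_six]; norm_num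
  · simp [b, c, Fin.sum_univ_six]; norm_num
  · simp [bh, c, Fin.sum_univ_six]; norm_num
  · simp [b, c, A, Matrix.cons_mulVec, Matrix.cons_dotProduct, Matrix.empty_mulVec, Matrix.dotProduct_of_isEmpty, Matrix.vecHead, Matrix.vecTail, Matrix.mulVec_empty, a51, a53, a54]
    ring_nf
  · simp [bh, c, Ah, Matrix.cons_mulVec, Matrix.cons_dotProduct, Matrix.empty_mulVec, Matrix.dotProduct_of_isEmpty, Matrix.vecHead, Matrix.vecTail, Matrix.mulVec_empty, a51, a53, a54]
    ring_nf
  · simp [b, c, Ah, Matrix.cons_mulVec, Matrix.cons_dotProduct, Matrix.empty_mulVec, Matrix.dotProduct_of_isEmpty, Matrix.vecHead, Matrix.vecTail, Matrix.mulVec_empty, a51, a53, a54]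
    ring_nf
  · simp [bh, c, A, Matrix.cons_mulVec, Matrix.cons_dotProduct, Matrix.empty_mulVec, Matrix.dotProduct_of_isEmpty, Matrix.vecHead, Matrix.vecTail, Matrix.mulVec_empty, a51, a53, a54]
    ring_nf
  · ext i
    fin_cases i <;>
      simp [A, c, Matrix.cons_mulVec, Matrix.cons_dotProduct, Matrix.empty_mulVec, Matrix.dotProduct_of_isEmpty, Matrix.vecHead, Matrix.vecTail, Matrix.mulVec_empty, a51, a53, a54] <;>
      ring_nf
  · ext i
    fin_cases i <;>
      simp [Ah, c, Matrix.cons_mulVec, Matrix.cons_dotProduct, Matrix.empty_mulVec, Matrix.dotProduct_of_isEmpty, Matrix.vecHead, Matrix.vecTail, Matrix.mulVec_empty, a51, a53, a54] <;>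
      ring_nf
end

section
/- Let â₅₂ be a real number with 2/3 ≤ â₅₂ ≤ 3/4 and set â₅₁ := 17â₅₂/103 − 86756827361/181963162950. Let A_E be the 5×5 real lower triangular matrix with rows (1, 0, 0, 0, 0), (−2/5, 6/5, 0, 0, 0), (−98716201/164885714, 1037580218/3709928565, 756096860/741985713, 0, 0), (â₅₁, â₅₂, 14091138538/30327193825 − 190â₅₂/103, 70â₅₂/103 + 89552314349/181963162950, 0), (206221/1153206, 168575/384402, −98430/64067, 322750/192201, 138250/576603), and let E₅ be the 5×5 lower triangular matrix with all entries on and below the diagonal equal to 1. Then A_E is invertible and the symmetric part S(A_E⁻¹E₅) := (A_E⁻¹E₅ + (A_E⁻¹E₅)ᵀ)/2 is positive definite. -/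
open Matrix

noncomputable def sB0 : Matrix (Fin 5) (Fin 5) ℝ :=
  !![1, (-7/10), (-163809577/1648857140), 49239619683/424580713550, 9540318088910093/34973501882152950;
     (-7/10), 6/5, (-341433406/741985713), 717852746/3709928565, (-29231/256268);
     (-163809577/1648857140), (-341433406/741985713), 756096860/741985713, (-1704414555553/1910613210975), (-2247700281757444/5828916980358825);
     49239619683/424580713550, 717852746/3709928565, (-1704414555553/1910613210975), 57331723783/60654387650, 8556988971221117/23315667921435300;
     9540318088910093/34973501882152950, (-29231/256268), (-2247700281757444/5828916980358825), 8556988971221117/23315667921435300, 138250/576603]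

noncomputable def sB1 : Matrix (Fin 5) (Fin 5) ℝ :=
  !![1, (-7/10), (-163809577/1648857140), 625913650421/5094968562600, 37199218096746197/139894007528611800;
     (-7/10), 6/5, (-341433406/741985713), 6979464823/29679428520, (-239453/1537608);
     (-163809577/1648857140), (-341433406/741985713), 756096860/741985713, (-7405063578337/7642452843900), (-2399579757408967/7771889307145100);
     625913650421/5094968562600, 6979464823/29679428520, (-7405063578337/7642452843900), 91150264237/90981581475, 3948377828146871/11657833960717650;
     37199218096746197/139894007528611800, (-239453/1537608), (-2399579757408967/7771889307145100), 3948377828146871/11657833960717650, 138250/576603]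

noncomputable def sL0 : Matrix (Fin 5) (Fin 5) ℝ :=
  !![1, 0, 0, 0, 0;
     (-7/10), 1, 0, 0, 0;
     (-163809577/1648857140), (-78606684551/105361971246), 1, 0, 0;
     49239619683/424580713550, 10495979323829/27130707595845, (-12364401358508928956762/11235708607982969681945), 1, 0;
     9540318088910093/34973501882152950, 26889987500934776/248311863363285945, (-15535756427234446166825607679/31672878309056376418979493860), (-79527420518125919544389528716558238774590841/253016051425961627147684512158089056795005186), 1]

noncomputable def sL1 : Matrix (Fin 5) (Fin 5) ℝ :=
  !![1, 0, 0, 0, 0;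
     (-7/10), 1, 0, 0, 0;
     (-163809577/1648857140), (-78606684551/105361971246), 1, 0, 0;
     625913650421/5094968562600, 49088430497291/108522830383380, (-104991017167770335902471/89885668863863757455560), 1, 0;
     37199218096746197/139894007528611800, 42536400387891629/993247453453143780, (-26789667350237985650364162983/63345756618112752837958987720), (-9787434700061221785705608158631623443068113333/3419100938287115471447353628682832357460929443), 1]

noncomputable def sL0T : Matrix (Fin 5) (Fin 5) ℝ :=
  !![1, (-7/10), (-163809577/1648857140), 49239619683/424580713550, 9540318088910093/34973501882152950;
     0, 1, (-78606684551/105361971246), 10495979323829/27130707595845, 26889987500934776/248311863363285945;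
     0, 0, 1, (-12364401358508928956762/11235708607982969681945), (-15535756427234446166825607679/31672878309056376418979493860);
     0, 0, 0, 1, (-79527420518125919544389528716558238774590841/253016051425961627147684512158089056795005186);
     0, 0, 0, 0, 1]

noncomputable def sL1T : Matrix (Fin 5) (Fin 5) ℝ :=
  !![1, (-7/10), (-163809577/1648857140), 625913650421/5094968562600, 37199218096746197/139894007528611800;
     0, 1, (-78606684551/105361971246), 49088430497291/108522830383380, 42536400387891629/993247453453143780;
     0, 0, 1, (-104991017167770335902471/89885668863863757455560), (-26789667350237985650364162983/63345756618112752837958987720);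
     0, 0, 0, 1, (-9787434700061221785705608158631623443068113333/3419100938287115471447353628682832357460929443);
     0, 0, 0, 0, 1]

noncomputable def sD0m : Matrix (Fin 5) (Fin 5) ℝ :=
  !![1, 0, 0, 0, 0;
     0, 71/100, 0, 0, 0;
     0, 0, 239986009102548866993/390885386790244041990, 0, 0;
     0, 0, 0, 59836991536313458578090009028921204363/729667492569125591719968182554241074250, 0;
     0, 0, 0, 0, 466052325725571018127297064375653279000081829645591/385149109752960305539343918496671248456049790694737120]

noncomputable def sD1m : Matrix (Fin 5) (Fin 5) ℝ :=
  !![1, 0, 0, 0, 0;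
     0, 71/100, 0, 0, 0;
     0, 0, 239986009102548866993/390885386790244041990, 0, 0;
     0, 0, 0, 1617199484009455759830666678341391827713/420288475719816340830701673151242858768000, 0;
     0, 0, 0, 0, 2864418327858741500512791101514109578152516890044071/108430512207554110320062714439767395219497436479217095]

noncomputable def sd0 : Fin 5 → ℝ := ![1, 71/100, 239986009102548866993/390885386790244041990, 59836991536313458578090009028921204363/729667492569125591719968182554241074250, 466052325725571018127297064375653279000081829645591/385149109752960305539343918496671248456049790694737120]

noncomputable def sd1 : Fin 5 → ℝ := ![1, 71/100, 239986009102548866993/390885386790244041990, 1617199484009455759830666678341391827713/420288475719816340830701673151242858768000, 2864418327858741500512791101514109578152516890044071/108430512207554110320062714439767395219497436479217095]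

noncomputable def eE : Matrix (Fin 5) (Fin 5) ℝ :=
  !![1, 0, 0, 0, 0; 1, 1, 0, 0, 0; 1, 1, 1, 0, 0; 1, 1, 1, 1, 0; 1, 1, 1, 1, 1]

noncomputable def sAE (a : ℝ) : Matrix (Fin 5) (Fin 5) ℝ :=
  !![1, 0, 0, 0, 0;
     -2 / 5, 6 / 5, 0, 0, 0;
     -98716201 / 164885714, 1037580218 / 3709928565, 756096860 / 741985713, 0, 0;
     17 * a / 103 - 86756827361 / 181963162950, a, 14091138538 / 30327193825 - 190 * a / 103,
       70 * a / 103 + 89552314349 / 181963162950, 0;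
     206221 / 1153206, 168575 / 384402, -98430 / 64067, 322750 / 192201,
       138250 / 576603]

noncomputable def sN (a : ℝ) : Matrix (Fin 5) (Fin 5) ℝ :=
  !![1, 0, 0, 0, 0;
     (-7/5), 6/5, 0, 0, 0;
     (-163809577/824428570), (-682866812/741985713), 756096860/741985713, 0, 0;
     77642430599/636871070325 + 17/103 * a, (-1037580218/3709928565) + 1 * a, (-1059207686606/1910613210975) + (-190/103) * a, 89552314349/181963162950 + 70/103 * a, 0;
     11464426606698443/17486750941076475 + (-17/103) * a, 168575/384402 + (-1) * a, (-3887882660908796/1942972326786275) + 190/103 * a, 13838855490640117/11657833960717650 + (-70/103) * a, 138250/576603]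

lemma posDef_conj' {n : Type*} [Fintype n] [DecidableEq n] {A B : Matrix n n ℝ}
    (hA : A.PosDef) (hB : IsUnit B.det) : (B * A * Bᵀ).PosDef := by
  refine Matrix.posDef_iff_dotProduct_mulVec.mpr ⟨?_, fun x hx => ?_⟩
  · have := Matrix.isHermitian_mul_mul_conjTranspose B hA.1
    simpa [Matrix.conjTranspose_eq_transpose_of_trivial] using this
  · have hinj : Function.Injective (Bᵀ).mulVec :=
      Matrix.mulVec_injective_iff_isUnit.2
        ((Matrix.isUnit_iff_isUnit_det _).2 (by simpa using hB))
    have hxB : Bᵀ *ᵥ x ≠ 0 := by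
      intro h
      exact hx (hinj (by simpa using h))
    have h2 := hA.dotProduct_mulVec_pos hxB
    simp only [star_trivial] at h2 ⊢
    calc (0:ℝ) < Bᵀ *ᵥ x ⬝ᵥ A *ᵥ Bᵀ *ᵥ x := h2
      _ = x ᵥ* B ⬝ᵥ A *ᵥ Bᵀ *ᵥ x := by rw [← Matrix.vecMul_transpose, transpose_transpose]
      _ = x ⬝ᵥ B *ᵥ (A *ᵥ Bᵀ *ᵥ x) := (Matrix.dotProduct_mulVec x B _).symm
      _ = x ⬝ᵥ (B * A * Bᵀ) *ᵥ x := by rw [Matrix.mulVec_mulVec, Matrix.mulVec_mulVec]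

lemma hL0T : sL0ᵀ = sL0T := by
  ext i j
  fin_cases i <;> fin_cases j <;>
    simp [sL0, sL0T, Matrix.transpose_apply, Matrix.vecHead, Matrix.vecTail]

lemma hL1T : sL1ᵀ = sL1T := by
  ext i j
  fin_cases i <;> fin_cases j <;>
    simp [sL1, sL1T, Matrix.transpose_apply, Matrix.vecHead, Matrix.vecTail]

lemma hD0diag : Matrix.diagonal sd0 = sD0m := by
  ext i j
  fin_cases i <;> fin_cases j <;>
    simp [sd0, sD0m, Matrix.diagonal_apply, Matrix.vecHead, Matrix.vecTail]

lemma hD1diag : Matrix.diagonal sd1 = sD1m := by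
  ext i j
  fin_cases i <;> fin_cases j <;>
    simp [sd1, sD1m, Matrix.diagonal_apply, Matrix.vecHead, Matrix.vecTail]

set_option maxHeartbeats 2000000 in
lemma hB0fact : sB0 = sL0 * sD0m * sL0T := by
  ext i j
  fin_cases i <;> fin_cases j <;>
    norm_num [sB0, sL0, sD0m, sL0T, Matrix.mul_apply, Fin.sum_univ_five,
      Matrix.vecHead, Matrix.vecTail, Matrix.cons_val_two, Matrix.cons_val_three, Matrix.cons_val_four]

set_option maxHeartbeats 2000000 in
lemma hB1fact : sB1 = sL1 * sD1m * sL1T := by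
  ext i j
  fin_cases i <;> fin_cases j <;>
    norm_num [sB1, sL1, sD1m, sL1T, Matrix.mul_apply, Fin.sum_univ_five,
      Matrix.vecHead, Matrix.vecTail, Matrix.cons_val_two, Matrix.cons_val_three, Matrix.cons_val_four]

set_option maxHeartbeats 1000000 in
lemma hL0det : IsUnit sL0.det := by
  have h : sL0.det = 1 := by
    norm_num [sL0, Matrix.det_succ_row_zero, Fin.sum_univ_succ,
      Matrix.vecHead, Matrix.vecTail, Matrix.cons_val_two, Matrix.cons_val_three, Matrix.cons_val_four]
  simp [h]

set_option maxHeartbeats 1000000 in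
lemma hL1det : IsUnit sL1.det := by
  have h : sL1.det = 1 := by
    norm_num [sL1, Matrix.det_succ_row_zero, Fin.sum_univ_succ,
      Matrix.vecHead, Matrix.vecTail, Matrix.cons_val_two, Matrix.cons_val_three, Matrix.cons_val_four]
  simp [h]

lemma hB0pos : sB0.PosDef := by
  have h := posDef_conj' (A := Matrix.diagonal sd0) (B := sL0)
    (Matrix.PosDef.diagonal (d := sd0) (fun i => by fin_cases i <;> norm_num [sd0])) hL0det
  rwa [hD0diag, hL0T, ← hB0fact] at h

lemma hB1pos : sB1.PosDef := by
  have h := posDef_conj' (A := Matrix.diagonal sd1) (B := sL1)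
    (Matrix.PosDef.diagonal (d := sd1) (fun i => by fin_cases i <;> norm_num [sd1])) hL1det
  rwa [hD1diag, hL1T, ← hB1fact] at h

set_option maxHeartbeats 1000000 in
lemma hENa (a : ℝ) : eE * sN a = sAE a := by
  ext i j
  fin_cases i <;> fin_cases j <;>
    · norm_num [eE, sN, sAE, Matrix.mul_apply, Fin.sum_univ_five,
        Matrix.vecHead, Matrix.vecTail, Matrix.cons_val_two, Matrix.cons_val_three, Matrix.cons_val_four]
      try ring

set_option maxHeartbeats 1000000 in
lemma hdeta (a : ℝ) : (sAE a).det
    = 5973165194000/20372913717759 * (70 * a / 103 + 89552314349/181963162950) := by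
  norm_num [sAE, Matrix.det_succ_row_zero, Fin.sum_univ_succ,
    Matrix.vecHead, Matrix.vecTail, Matrix.cons_val_two, Matrix.cons_val_three, Matrix.cons_val_four]
  ring

set_option maxHeartbeats 1000000 in
lemma hEdeta : eE.det = 1 := by
  norm_num [eE, Matrix.det_succ_row_zero, Fin.sum_univ_succ,
    Matrix.vecHead, Matrix.vecTail, Matrix.cons_val_two, Matrix.cons_val_three, Matrix.cons_val_four]

set_option maxHeartbeats 1000000 in
lemma hcomba (a : ℝ) : ((1:ℝ)/2) • (sN a + (sN a)ᵀ)
    = (9 - 12*a) • sB0 + (12*a - 8) • sB1 := by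
  ext i j
  fin_cases i <;> fin_cases j <;>
    · simp [sN, sB0, sB1, Matrix.smul_apply, Matrix.add_apply,
        Matrix.transpose_apply, Matrix.vecHead, Matrix.vecTail, smul_eq_mul]
      try ring

lemma sNposdef (a : ℝ) (h1 : 2/3 ≤ a) (h2 : a ≤ 3/4) :
    (((1:ℝ)/2) • (sN a + (sN a)ᵀ)).PosDef := by
  refine Matrix.posDef_iff_dotProduct_mulVec.mpr ⟨?_, ?_⟩
  · show (((1:ℝ)/2) • (sN a + (sN a)ᵀ))ᴴ = _
    rw [Matrix.conjTranspose_eq_transpose_of_trivial, Matrix.transpose_smul,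
      Matrix.transpose_add, Matrix.transpose_transpose, add_comm]
  · intro x hx
    have p0 := hB0pos.dotProduct_mulVec_pos hx
    have p1 := hB1pos.dotProduct_mulVec_pos hx
    simp only [star_trivial] at p0 p1 ⊢
    rw [hcomba a]
    simp only [Matrix.add_mulVec, Matrix.smul_mulVec, dotProduct_add,
      dotProduct_smul, smul_eq_mul]
    rcases le_total a (17/24) with h | h
    · nlinarith [mul_nonneg (by linarith : (0:ℝ) ≤ 12*a-8) p1.le,
        mul_le_mul_of_nonneg_right (by linarith : (1:ℝ)/2 ≤ 9-12*a) p0.le]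
    · nlinarith [mul_nonneg (by linarith : (0:ℝ) ≤ 9-12*a) p0.le,
        mul_le_mul_of_nonneg_right (by linarith : (1:ℝ)/2 ≤ 12*a-8) p1.le]

/-- For `2/3 ≤ â₅₂ ≤ 3/4`, the explicit Butcher submatrix `A_E` of the
R-IERK(3,6;â₅₂) method is invertible and the symmetric part of its
differentiation matrix `A_E⁻¹E₅` is positive definite. -/
theorem stmt19 (a52 : ℝ) (h1 : 2 / 3 ≤ a52) (h2 : a52 ≤ 3 / 4) :
    let a51 : ℝ := 17 * a52 / 103 - 86756827361 / 181963162950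
    let AE : Matrix (Fin 5) (Fin 5) ℝ :=
      !![1, 0, 0, 0, 0;
         -2 / 5, 6 / 5, 0, 0, 0;
         -98716201 / 164885714, 1037580218 / 3709928565, 756096860 / 741985713, 0, 0;
         a51, a52, 14091138538 / 30327193825 - 190 * a52 / 103,
           70 * a52 / 103 + 89552314349 / 181963162950, 0;
         206221 / 1153206, 168575 / 384402, -98430 / 64067, 322750 / 192201,
           138250 / 576603]
    let E : Matrix (Fin 5) (Fin 5) ℝ :=
      Matrix.of fun i j => if j ≤ i then 1 else 0
    IsUnit AE.det
    ∧ ((1 / 2 : ℝ) • (AE⁻¹ * E + (AE⁻¹ * E)ᵀ)).PosDef := by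
  
  intro a51 AE E
  have hAE : AE = sAE a52 := rfl
  have hE : E = eE := by
    ext i j; fin_cases i <;> fin_cases j <;> rfl
  have hEN : E * sN a52 = AE := by rw [hE, hAE]; exact hENa a52
  have hEdet : IsUnit E.det := by rw [hE, hEdeta]; exact isUnit_one
  have hdet4 : (0:ℝ) < 70 * a52 / 103 + 89552314349 / 181963162950 := by linarith
  have hdetAE : IsUnit AE.det := by
    rw [isUnit_iff_ne_zero, hAE, hdeta]
    exact (mul_pos (by norm_num) hdet4).ne'
  haveI : Invertible E := E.invertibleOfIsUnitDet hEdet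
  have hNdef : sN a52 = E⁻¹ * AE := by
    rw [← hEN, Matrix.inv_mul_cancel_left_of_invertible]
  have hNM : sN a52 * (AE⁻¹ * E) = 1 := by
    rw [hNdef, Matrix.mul_assoc, ← Matrix.mul_assoc AE,
      Matrix.mul_nonsing_inv _ hdetAE, Matrix.one_mul, Matrix.nonsing_inv_mul _ hEdet]
  have hMdet : IsUnit (AE⁻¹ * E).det := Matrix.isUnit_det_of_left_inverse hNM
  refine ⟨hdetAE, ?_⟩
  have e1 : (AE⁻¹ * E)ᵀ * sN a52 * (AE⁻¹ * E) = (AE⁻¹ * E)ᵀ := by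
    rw [Matrix.mul_assoc, hNM, Matrix.mul_one]
  have e2 : (AE⁻¹ * E)ᵀ * (sN a52)ᵀ * (AE⁻¹ * E) = AE⁻¹ * E := by
    rw [← Matrix.transpose_mul, hNM, Matrix.transpose_one, Matrix.one_mul]
  have hId : ((1:ℝ)/2) • (AE⁻¹ * E + (AE⁻¹ * E)ᵀ)
      = (AE⁻¹ * E)ᵀ * (((1:ℝ)/2) • (sN a52 + (sN a52)ᵀ)) * (AE⁻¹ * E) := by
    rw [Matrix.mul_smul, Matrix.smul_mul, Matrix.mul_add, Matrix.add_mul, e1, e2, add_comm]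
  have hfin := posDef_conj' (A := ((1:ℝ)/2) • (sN a52 + (sN a52)ᵀ)) (B := (AE⁻¹ * E)ᵀ)
    (sNposdef a52 (by linarith) (by linarith))
    (by rw [Matrix.det_transpose]; exact hMdet)
  rw [Matrix.transpose_transpose] at hfin
  rw [show (1 / 2 : ℝ) • (AE⁻¹ * E + (AE⁻¹ * E)ᵀ)
      = ((1:ℝ)/2) • (AE⁻¹ * E + (AE⁻¹ * E)ᵀ) from rfl, hId]
  exact hfin
end
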